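/- Let U ⊆ ℝⁿ be a nonempty open convex set, f : U → ℝ^{n+1} and ν : U → (ℝ^{n+1})* twice continuously differentiable maps with ν(x)(f(x)) = 1 for all x ∈ U, satisfying the Lagrangian condition (Dν(x)(X))(Df(x)(Y)) = (Dν(x)(Y))(Df(x)(X)) for all x ∈ U and X, Y ∈ ℝⁿ. Then: (i) there exists a differentiable function μ : U → ℝ with Dμ(x)(X) = (Dν(x)(X))(f(x)) for all x ∈ U and X ∈ ℝⁿ; (ii) any two such functions μ differ by an additive constant; (iii) for any such μ, the maps F := e^μ · f and Ψ := e^{−μ} · ν are dual to each other: Ψ(x)(F(x)) = 1 and Ψ(x)(DF(x)(X)) = 0 for all x ∈ U and X ∈ ℝⁿ. -/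

import Mathlib

set_option maxHeartbeats 1000000
set_option synthInstance.maxHeartbeats 1000000

open Metric MeasureTheory intervalIntegral

/-- Poincaré lemma for 1-forms on an open convex set: a `C¹` 1-form with symmetric
derivative has a potential. -/
theorem exists_potential {E : Type*} [NormedAddCommGroup E] [NormedSpace ℝ E] [ProperSpace E]
    {U : Set E} (hU : IsOpen U) (hconv : Convex ℝ U) {x₀ : E} (hx₀ : x₀ ∈ U)
    {ω : E → E →L[ℝ] ℝ} (hω : ContDiffOn ℝ 1 ω U)
    (hsymm : ∀ x ∈ U, ∀ A B : E, fderiv ℝ ω x A B = fderiv ℝ ω x B A) :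
    ∃ μ : E → ℝ, ∀ x ∈ U, HasFDerivAt μ (ω x) x := by
  have hωc : ContinuousOn ω U := hω.continuousOn
  have hω' : ContinuousOn (fderiv ℝ ω) U :=
    (hω.fderiv_of_isOpen hU (m := 0) (by norm_num)).continuousOn
  have hωdiff : ∀ p ∈ U, HasFDerivAt ω (fderiv ℝ ω p) p := fun p hp =>
    ((hω.contDiffAt (hU.mem_nhds hp)).differentiableAt one_ne_zero).hasFDerivAt
  -- the segment map
  have hseg : ∀ t ∈ Set.Icc (0:ℝ) 1, ∀ y ∈ U, x₀ + t • (y - x₀) ∈ U := by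
    intro t ht y hy
    have : (1 - t) • x₀ + t • y ∈ U := hconv hx₀ hy (by linarith [ht.2]) ht.1 (by ring)
    convert this using 1
    simp [smul_sub, sub_smul]
    abel
  refine ⟨fun x => ∫ t in (0:ℝ)..1, ω (x₀ + t • (x - x₀)) (x - x₀), ?_⟩
  intro x hx
  obtain ⟨δ, δpos, hδ⟩ := Metric.isOpen_iff.1 hU x hx
  set ε := δ / 2 with hεdef
  have εpos : 0 < ε := by positivity
  have hball : closedBall x ε ⊆ U := fun y hy => hδ (by
    have h1 : dist y x ≤ ε := mem_closedBall.mp hy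
    rw [mem_ball]; rw [hεdef] at h1; linarith)
  -- the compact tube
  set K : Set E := (fun p : ℝ × E => x₀ + p.1 • (p.2 - x₀)) '' (Set.Icc (0:ℝ) 1 ×ˢ closedBall x ε)
    with hKdef
  have hKcomp : IsCompact K := (isCompact_Icc.prod (isCompact_closedBall x ε)).image (by fun_prop)
  have hKU : K ⊆ U := by
    rintro _ ⟨⟨t, y⟩, ⟨ht, hy⟩, rfl⟩
    exact hseg t ht y (hball hy)
  obtain ⟨M, hM⟩ := hKcomp.exists_bound_of_continuousOn (f := fderiv ℝ ω) (hω'.mono hKU)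
  obtain ⟨M₂, hM₂⟩ := hKcomp.exists_bound_of_continuousOn (hωc.mono hKU)
  set C : ℝ := (max M 0) * (‖x - x₀‖ + ε) + max M₂ 0 with hCdef
  set F : E → ℝ → ℝ := fun y t => ω (x₀ + t • (y - x₀)) (y - x₀) with hFdef
  set F' : E → ℝ → E →L[ℝ] ℝ := fun y t =>
    t • ((fderiv ℝ ω (x₀ + t • (y - x₀))).flip (y - x₀)) + ω (x₀ + t • (y - x₀)) with hF'def
  have hmem : ∀ t ∈ Set.Icc (0:ℝ) 1, ∀ y ∈ closedBall x ε, x₀ + t • (y - x₀) ∈ U :=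
    fun t ht y hy => hseg t ht y (hball hy)
  have hmemK : ∀ t ∈ Set.Icc (0:ℝ) 1, ∀ y ∈ closedBall x ε, x₀ + t • (y - x₀) ∈ K :=
    fun t ht y hy => ⟨(t, y), ⟨ht, hy⟩, rfl⟩
  -- continuity in t for fixed y
  have hcont : ∀ y ∈ closedBall x ε, ContinuousOn (fun t => x₀ + t • (y - x₀)) (Set.Icc (0:ℝ) 1) :=
    fun y _ => by fun_prop
  have hFcont : ∀ y ∈ closedBall x ε, ContinuousOn (F y) (Set.Icc (0:ℝ) 1) := by
    intro y hy
    exact ((ContinuousLinearMap.apply ℝ ℝ (y - x₀)).continuous.comp_continuousOn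
      ((hωc.comp (hcont y hy)) (fun t ht => hmem t ht y hy)))
  have hF'cont : ∀ y ∈ closedBall x ε, ContinuousOn (F' y) (Set.Icc (0:ℝ) 1) := by
    intro y hy
    have h1 : ContinuousOn (fun t => fderiv ℝ ω (x₀ + t • (y - x₀))) (Set.Icc (0:ℝ) 1) :=
      (hω'.comp (hcont y hy)) (fun t ht => hmem t ht y hy)
    have h2 : ContinuousOn (fun t => ω (x₀ + t • (y - x₀))) (Set.Icc (0:ℝ) 1) :=
      (hωc.comp (hcont y hy)) (fun t ht => hmem t ht y hy)
    apply ContinuousOn.add ?_ h2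
    exact (continuousOn_id).smul
      ((ContinuousLinearMap.apply ℝ (E →L[ℝ] ℝ) (y - x₀)).continuous.comp_continuousOn
        ((ContinuousLinearMap.flipₗᵢ ℝ E E ℝ).continuous.comp_continuousOn h1))
  have hI : Set.uIoc (0:ℝ) 1 ⊆ Set.Icc (0:ℝ) 1 := by
    rw [Set.uIoc_of_le (zero_le_one)]
    exact Set.Ioc_subset_Icc_self
  have hxball : x ∈ closedBall x ε := mem_closedBall_self εpos.le
  -- differentiation under the integral sign
  have key : HasFDerivAt (fun y => ∫ t in (0:ℝ)..1, F y t) (∫ t in (0:ℝ)..1, F' x t) x := by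
    apply intervalIntegral.hasFDerivAt_integral_of_dominated_of_fderiv_le
      (s := ball x ε) (bound := fun _ => C) (Metric.ball_mem_nhds x εpos)
    · filter_upwards [Metric.closedBall_mem_nhds x εpos] with y hy
      exact ((hFcont y hy).mono hI).aestronglyMeasurable measurableSet_uIoc
    · exact ((hFcont x hxball).mono (by rw [Set.uIcc_of_le zero_le_one])).intervalIntegrable
    · exact ((hF'cont x hxball).mono hI).aestronglyMeasurable measurableSet_uIoc
    · refine Filter.Eventually.of_forall (fun t ht y hy => ?_)
      have ht' : t ∈ Set.Icc (0:ℝ) 1 := hI ht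
      have hy' : y ∈ closedBall x ε := ball_subset_closedBall hy
      have hpK : x₀ + t • (y - x₀) ∈ K := hmemK t ht' y hy'
      calc ‖F' y t‖ ≤ ‖t • ((fderiv ℝ ω (x₀ + t • (y - x₀))).flip (y - x₀))‖
            + ‖ω (x₀ + t • (y - x₀))‖ := norm_add_le _ _
        _ ≤ |t| * (‖fderiv ℝ ω (x₀ + t • (y - x₀))‖ * ‖y - x₀‖) + max M₂ 0 := by
            gcongr
            · rw [norm_smul, Real.norm_eq_abs]
              gcongr
              calc ‖(fderiv ℝ ω (x₀ + t • (y - x₀))).flip (y - x₀)‖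
                  ≤ ‖(fderiv ℝ ω (x₀ + t • (y - x₀))).flip‖ * ‖y - x₀‖ :=
                    ContinuousLinearMap.le_opNorm _ _
                _ = ‖fderiv ℝ ω (x₀ + t • (y - x₀))‖ * ‖y - x₀‖ := by
                    rw [ContinuousLinearMap.opNorm_flip]
            · exact le_max_of_le_left (hM₂ _ hpK)
        _ ≤ 1 * ((max M 0) * (‖x - x₀‖ + ε)) + max M₂ 0 := by
            gcongr
            · rw [abs_le]; constructor <;> [linarith [ht'.1]; exact ht'.2]
            · exact le_max_of_le_left (hM _ hpK)
            · calc ‖y - x₀‖ ≤ ‖y - x‖ + ‖x - x₀‖ := norm_sub_le_norm_sub_add_norm_sub _ _ _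
                _ ≤ ε + ‖x - x₀‖ := by
                    gcongr
                    rw [← dist_eq_norm]; exact hy'
                _ = ‖x - x₀‖ + ε := by ring
        _ = C := by rw [hCdef]; ring
    · exact intervalIntegrable_const
    · refine Filter.Eventually.of_forall (fun t ht y hy => ?_)
      have ht' : t ∈ Set.Icc (0:ℝ) 1 := hI ht
      have hy' : y ∈ closedBall x ε := ball_subset_closedBall hy
      have hp : x₀ + t • (y - x₀) ∈ U := hmem t ht' y hy'
      have hc : HasFDerivAt (fun z : E => x₀ + t • (z - x₀)) (t • ContinuousLinearMap.id ℝ E) y := by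
        simpa using (((hasFDerivAt_id y).sub_const x₀).const_smul t).const_add x₀
      have hωp := (hωdiff _ hp).comp y hc
      have hu : HasFDerivAt (fun z : E => z - x₀) (ContinuousLinearMap.id ℝ E) y :=
        (hasFDerivAt_id y).sub_const x₀
      have := hωp.clm_apply hu
      convert this using 1
      · rfl
      ext X
      simp only [hF'def, ContinuousLinearMap.smul_apply, ContinuousLinearMap.add_apply,
        ContinuousLinearMap.comp_apply, ContinuousLinearMap.flip_apply,
        ContinuousLinearMap.coe_id', id_eq, _root_.map_smul, smul_eq_mul, Function.comp_apply]
      ring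
  -- identify the derivative with ω x
  have hint : IntervalIntegrable (F' x) volume 0 1 :=
    ((hF'cont x hxball).mono (by rw [Set.uIcc_of_le zero_le_one])).intervalIntegrable
  have hfix : (∫ t in (0:ℝ)..1, F' x t) = ω x := by
    ext X
    rw [ContinuousLinearMap.intervalIntegral_apply hint]
    have heq : ∀ t ∈ Set.uIcc (0:ℝ) 1,
        F' x t X = t * (fderiv ℝ ω (x₀ + t • (x - x₀)) (x - x₀) X)
          + ω (x₀ + t • (x - x₀)) X := by
      intro t ht
      rw [Set.uIcc_of_le zero_le_one] at ht
      have hp : x₀ + t • (x - x₀) ∈ U := hmem t ht x hxball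
      simp only [hF'def, ContinuousLinearMap.smul_apply, ContinuousLinearMap.add_apply,
        ContinuousLinearMap.flip_apply, smul_eq_mul]
      rw [hsymm _ hp]
    rw [intervalIntegral.integral_congr heq]
    have hderiv : ∀ t ∈ Set.uIcc (0:ℝ) 1,
        HasDerivAt (fun s => s * ω (x₀ + s • (x - x₀)) X)
          (t * (fderiv ℝ ω (x₀ + t • (x - x₀)) (x - x₀) X) + ω (x₀ + t • (x - x₀)) X) t := by
      intro t ht
      rw [Set.uIcc_of_le zero_le_one] at ht
      have hp : x₀ + t • (x - x₀) ∈ U := hmem t ht x hxball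
      have hcder : HasDerivAt (fun s : ℝ => x₀ + s • (x - x₀)) (x - x₀) t := by
        simpa using ((hasDerivAt_id t).smul_const (x - x₀)).const_add x₀
      have h1 : HasDerivAt (fun s => ω (x₀ + s • (x - x₀)) X)
          (fderiv ℝ ω (x₀ + t • (x - x₀)) (x - x₀) X) t := by
        have := ((hωdiff _ hp).comp_hasDerivAt t hcder)
        exact (ContinuousLinearMap.apply ℝ ℝ X).hasFDerivAt.comp_hasDerivAt t this
      have := (hasDerivAt_id t).mul h1
      exact this.congr_deriv (by simp only [id_eq]; ring)
    have hcont2 : IntervalIntegrable (fun t => t * (fderiv ℝ ω (x₀ + t • (x - x₀)) (x - x₀) X)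
        + ω (x₀ + t • (x - x₀)) X) volume 0 1 := by
      apply ContinuousOn.intervalIntegrable
      rw [Set.uIcc_of_le zero_le_one]
      have h1 : ContinuousOn (fun t => fderiv ℝ ω (x₀ + t • (x - x₀))) (Set.Icc (0:ℝ) 1) :=
        (hω'.comp (hcont x hxball)) (fun t ht => hmem t ht x hxball)
      have h2 : ContinuousOn (fun t => ω (x₀ + t • (x - x₀))) (Set.Icc (0:ℝ) 1) :=
        (hωc.comp (hcont x hxball)) (fun t ht => hmem t ht x hxball)
      apply ContinuousOn.add
      · exact continuousOn_id.mul
          ((ContinuousLinearMap.apply ℝ ℝ X).continuous.comp_continuousOn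
            ((ContinuousLinearMap.apply ℝ (E →L[ℝ] ℝ) (x - x₀)).continuous.comp_continuousOn h1))
      · exact (ContinuousLinearMap.apply ℝ ℝ X).continuous.comp_continuousOn h2
    rw [intervalIntegral.integral_eq_sub_of_hasDerivAt hderiv hcont2]
    simp
  rw [hfix] at key
  exact key

/-- The `flip` operation on bilinear forms, as a continuous linear map. -/
noncomputable def Phi (n : ℕ) : ((Fin n → ℝ) →L[ℝ] ((Fin (n+1) → ℝ) →L[ℝ] ℝ)) →L[ℝ]
    (((Fin (n+1) → ℝ)) →L[ℝ] ((Fin n → ℝ) →L[ℝ] ℝ)) :=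
  ((ContinuousLinearMap.flipₗᵢ ℝ (Fin n → ℝ) ((Fin (n+1) → ℝ)) ℝ).toContinuousLinearEquiv :
    _ →L[ℝ] _)



/-- On a nonempty open convex set, the Lagrangian condition yields a
potential `μ` for the 1-form `X ↦ (Dν(x)(X))(f(x))`, unique up to an additive constant,
and the corresponding rescaled lift `(e^μ f, e^{−μ} ν)` is a dual pair. -/
theorem stmt_5 (n : ℕ) (hn : 1 ≤ n) (U : Set (Fin n → ℝ)) (hU : IsOpen U)
    (hne : U.Nonempty) (hconv : Convex ℝ U)
    (f : (Fin n → ℝ) → (Fin (n + 1) → ℝ))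
    (ν : (Fin n → ℝ) → (Fin (n + 1) → ℝ) →L[ℝ] ℝ)
    (hf : ContDiffOn ℝ 2 f U) (hν : ContDiffOn ℝ 2 ν U)
    (hνf : ∀ x ∈ U, ν x (f x) = 1)
    (hLag : ∀ x ∈ U, ∀ X Y : Fin n → ℝ,
      (fderiv ℝ ν x X) (fderiv ℝ f x Y) = (fderiv ℝ ν x Y) (fderiv ℝ f x X)) :
    -- (i) existence of a potential μ
    (∃ μ : (Fin n → ℝ) → ℝ, ∀ x ∈ U, DifferentiableAt ℝ μ x ∧
      ∀ X : Fin n → ℝ, fderiv ℝ μ x X = (fderiv ℝ ν x X) (f x)) ∧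
    -- (ii) uniqueness up to an additive constant
    (∀ μ₁ μ₂ : (Fin n → ℝ) → ℝ,
      (∀ x ∈ U, DifferentiableAt ℝ μ₁ x ∧
        ∀ X : Fin n → ℝ, fderiv ℝ μ₁ x X = (fderiv ℝ ν x X) (f x)) →
      (∀ x ∈ U, DifferentiableAt ℝ μ₂ x ∧
        ∀ X : Fin n → ℝ, fderiv ℝ μ₂ x X = (fderiv ℝ ν x X) (f x)) →
      ∃ c : ℝ, ∀ x ∈ U, μ₁ x = μ₂ x + c) ∧
    -- (iii) the rescaled maps are dual to each other
    (∀ μ : (Fin n → ℝ) → ℝ,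
      (∀ x ∈ U, DifferentiableAt ℝ μ x ∧
        ∀ X : Fin n → ℝ, fderiv ℝ μ x X = (fderiv ℝ ν x X) (f x)) →
      ∀ x ∈ U,
        (Real.exp (-μ x) • ν x) (Real.exp (μ x) • f x) = 1 ∧
        ∀ X : Fin n → ℝ,
          (Real.exp (-μ x) • ν x)
            (fderiv ℝ (fun z => Real.exp (μ z) • f z) x X) = 0) := by
  obtain ⟨x₀, hx₀⟩ := hne
  -- differentiability facts
  have hfd : ∀ x ∈ U, HasFDerivAt f (fderiv ℝ f x) x := fun x hx =>
    ((hf.contDiffAt (hU.mem_nhds hx)).differentiableAt two_ne_zero).hasFDerivAt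
  have hνd : ∀ x ∈ U, HasFDerivAt ν (fderiv ℝ ν x) x := fun x hx =>
    ((hν.contDiffAt (hU.mem_nhds hx)).differentiableAt two_ne_zero).hasFDerivAt
  -- the relation ν(Df X) + Dν(X)(f) = 0 on U
  have hdual : ∀ x ∈ U, ∀ X : Fin n → ℝ,
      ν x (fderiv ℝ f x X) + (fderiv ℝ ν x X) (f x) = 0 := by
    intro x hx X
    have hg : HasFDerivAt (fun y => ν y (f y))
        ((ν x).comp (fderiv ℝ f x) + (fderiv ℝ ν x).flip (f x)) x :=
      (hνd x hx).clm_apply (hfd x hx)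
    have hg1 : fderiv ℝ (fun y => ν y (f y)) x = 0 := by
      have heq : (fun y => ν y (f y)) =ᶠ[nhds x] (fun _ => (1:ℝ)) := by
        filter_upwards [hU.mem_nhds hx] with y hy using hνf y hy
      rw [Filter.EventuallyEq.fderiv_eq heq, fderiv_fun_const]
      rfl
    have := hg.fderiv
    rw [hg1] at this
    have h0 := congrFun (congrArg (fun L : (Fin n → ℝ) →L[ℝ] ℝ => (L : (Fin n → ℝ) → ℝ)) this.symm) X
    simpa [ContinuousLinearMap.add_apply, ContinuousLinearMap.comp_apply,
      ContinuousLinearMap.flip_apply] using h0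
  refine ⟨?_, ?_, ?_⟩
  · -- part (i)
    have hΦapp : ∀ (L : (Fin n → ℝ) →L[ℝ] (Fin (n+1) → ℝ) →L[ℝ] ℝ) (v : Fin (n+1) → ℝ)
        (X : Fin n → ℝ), Phi n L v X = L X v := fun L v X => rfl
    set ω : (Fin n → ℝ) → (Fin n → ℝ) →L[ℝ] ℝ := fun y => Phi n (fderiv ℝ ν y) (f y)
      with hωdef
    have hν' : ContDiffOn ℝ 1 (fderiv ℝ ν) U := hν.fderiv_of_isOpen hU (m := 1) (by norm_num)
    have hPhiCD : ContDiff ℝ 1 (⇑(Phi n)) := by fun_prop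
    have hflip : ContDiffOn ℝ 1 (fun y => Phi n (fderiv ℝ ν y)) U :=
      hPhiCD.comp_contDiffOn hν'
    have hωCD : ContDiffOn ℝ 1 ω U := hflip.clm_apply (hf.of_le one_le_two)
    have hsymm : ∀ x ∈ U, ∀ A B : Fin n → ℝ, fderiv ℝ ω x A B = fderiv ℝ ω x B A := by
      intro x hx A B
      have hν'd : HasFDerivAt (fderiv ℝ ν) (fderiv ℝ (fderiv ℝ ν) x) x :=
        ((hν'.contDiffAt (hU.mem_nhds hx)).differentiableAt one_ne_zero).hasFDerivAt
      have hPhiD : HasFDerivAt (𝕜 := ℝ)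
          (E := (Fin n → ℝ) →L[ℝ] ((Fin (n+1) → ℝ) →L[ℝ] ℝ))
          (F := ((Fin (n+1) → ℝ)) →L[ℝ] ((Fin n → ℝ) →L[ℝ] ℝ))
          (⇑(Phi n)) (Phi n) (fderiv ℝ ν x) :=
        by apply ContinuousLinearMap.hasFDerivAt
      have hc : HasFDerivAt (fun y => Phi n (fderiv ℝ ν y))
          ((Phi n).comp (fderiv ℝ (fderiv ℝ ν) x)) x :=
        HasFDerivAt.comp (𝕜 := ℝ) (E := Fin n → ℝ)
          (F := (Fin n → ℝ) →L[ℝ] ((Fin (n+1) → ℝ) →L[ℝ] ℝ))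
          (G := (Fin (n+1) → ℝ) →L[ℝ] ((Fin n → ℝ) →L[ℝ] ℝ)) x hPhiD hν'd
      have hωx : HasFDerivAt ω
          ((Phi n (fderiv ℝ ν x)).comp (fderiv ℝ f x)
            + ((Phi n).comp (fderiv ℝ (fderiv ℝ ν) x)).flip (f x)) x :=
        hc.clm_apply (hfd x hx)
      rw [hωx.fderiv]
      have hsnd : ∀ A B : Fin n → ℝ,
          fderiv ℝ (fderiv ℝ ν) x A B = fderiv ℝ (fderiv ℝ ν) x B A :=
        (hν.contDiffAt (hU.mem_nhds hx)).isSymmSndFDerivAt (by norm_num)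
      simp only [ContinuousLinearMap.add_apply, ContinuousLinearMap.comp_apply,
        ContinuousLinearMap.flip_apply, hΦapp]
      rw [hLag x hx B A, hsnd A B]
    obtain ⟨μ, hμ⟩ := exists_potential hU hconv hx₀ hωCD hsymm
    refine ⟨μ, fun x hx => ⟨(hμ x hx).differentiableAt, fun X => ?_⟩⟩
    rw [(hμ x hx).fderiv]
    exact hΦapp _ _ _
  · -- part (ii)
    intro μ₁ μ₂ h₁ h₂
    refine ⟨μ₁ x₀ - μ₂ x₀, fun x hx => ?_⟩
    have key : ∀ y ∈ U, HasFDerivWithinAt (fun z => μ₁ z - μ₂ z) (0 : (Fin n → ℝ) →L[ℝ] ℝ) U y := by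
      intro y hy
      have h := ((h₁ y hy).1.hasFDerivAt.sub (h₂ y hy).1.hasFDerivAt)
      have : fderiv ℝ μ₁ y - fderiv ℝ μ₂ y = 0 := by
        ext X
        simp [(h₁ y hy).2 X, (h₂ y hy).2 X]
      rw [this] at h
      exact h.hasFDerivWithinAt
    have hbd := Convex.norm_image_sub_le_of_norm_hasFDerivWithin_le (C := 0) key
      (fun y (_ : y ∈ U) => by simp) hconv hx₀ hx
    simp only [zero_mul, norm_le_zero_iff, sub_eq_zero] at hbd
    linarith [hbd]
  · -- part (iii)
    intro μ hμ x hx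
    constructor
    · simp only [ContinuousLinearMap.smul_apply, _root_.map_smul, smul_eq_mul, hνf x hx,
        mul_one, ← Real.exp_add]
      simp
    · intro X
      have hμd : HasFDerivAt μ (fderiv ℝ μ x) x := (hμ x hx).1.hasFDerivAt
      have hexp : HasFDerivAt (fun z => Real.exp (μ z)) (Real.exp (μ x) • fderiv ℝ μ x) x :=
        hμd.exp
      have hF : HasFDerivAt (fun z => Real.exp (μ z) • f z)
          (Real.exp (μ x) • fderiv ℝ f x
            + (Real.exp (μ x) • fderiv ℝ μ x).smulRight (f x)) x :=
        hexp.smul (hfd x hx)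
      rw [hF.fderiv]
      simp only [ContinuousLinearMap.add_apply, ContinuousLinearMap.smul_apply,
        ContinuousLinearMap.smulRight_apply, _root_.map_add, _root_.map_smul, smul_eq_mul]
      have h3 : ν x (fderiv ℝ f x X) = -((fderiv ℝ ν x X) (f x)) := by
        linarith [hdual x hx X]
      rw [h3, hνf x hx, (hμ x hx).2 X]
      ring
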